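/- Let ω > 0 and ħ > 0 be real. Then there exists a real constant c such that the function W: ℝ → ℝ, W(x) = ω² x² + 8ħ²ω(2ωx² − ħ)/(2ωx² + ħ)² + c, satisfies the nonlinear fourth-order ordinary differential equation −ħ² W''''(x) − 12ω² (d/dx)(x·W(x)) + 3 (d²/dx²)(W(x)²) − 2ω² x² W''(x) + 4ω⁴ x² = 0 for all x ∈ ℝ. (Note that 2ωx² + ħ > 0 for all x, so W is smooth on all of ℝ.) -/

import Mathlib

noncomputable section

/-- `W(x) = ω²x² + 8ħ²ω(2ωx² − ħ)/(2ωx² + ħ)² + c`. -/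
def Wex1 (ω hbar c : ℝ) : ℝ → ℝ := fun x =>
  ω ^ 2 * x ^ 2 + 8 * hbar ^ 2 * ω * (2 * ω * x ^ 2 - hbar) / (2 * ω * x ^ 2 + hbar) ^ 2 + c

private lemma HDshift {f g : ℝ → ℝ} {a b x : ℝ} (h : HasDerivAt f a x)
    (h1 : g = f) (h2 : b = a) : HasDerivAt g b x := h1 ▸ h2 ▸ h

/-- First derivative of `Wex1 ω hbar (4*ω*hbar/3)`. -/
def Pd1 (ω hbar : ℝ) : ℝ → ℝ := fun x =>
  (98*ω^2*hbar^3*x - 52*ω^3*hbar^2*x^3 + 24*ω^4*hbar*x^5 + 16*ω^5*x^7)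
    / (2*ω*x^2 + hbar)^3

/-- Second derivative. -/
def Pd2 (ω hbar : ℝ) : ℝ → ℝ := fun x =>
  (98*ω^2*hbar^4 - 1136*ω^3*hbar^3*x^2 + 432*ω^4*hbar^2*x^4 + 64*ω^5*hbar*x^6 + 32*ω^6*x^8)
    / (2*ω*x^2 + hbar)^4

/-- Third derivative. -/
def Pd3 (ω hbar : ℝ) : ℝ → ℝ := fun x =>
  (-(3840*ω^3*hbar^4*x) + 15360*ω^4*hbar^3*x^3 - 3072*ω^5*hbar^2*x^5)
    / (2*ω*x^2 + hbar)^5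

/-- Fourth derivative. -/
def Pd4 (ω hbar : ℝ) : ℝ → ℝ := fun x =>
  (-(3840*ω^3*hbar^5) + 115200*ω^4*hbar^4*x^2 - 230400*ω^5*hbar^3*x^4 + 30720*ω^6*hbar^2*x^6)
    / (2*ω*x^2 + hbar)^6

/-- there is a real constant `c` such that `W` satisfies the nonlinear
fourth-order ODE `−ħ²W'''' − 12ω²(xW)' + 3(W²)'' − 2ω²x²W'' + 4ω⁴x² = 0` on all of `ℝ`. -/
theorem stmt_18 (ω hbar : ℝ) (hω : 0 < ω) (hb : 0 < hbar) :
    ∃ c : ℝ, ∀ x : ℝ,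
      -hbar ^ 2 * (deriv^[4] (Wex1 ω hbar c)) x
          - 12 * ω ^ 2 * deriv (fun t => t * Wex1 ω hbar c t) x
          + 3 * (deriv^[2] (fun t => (Wex1 ω hbar c t) ^ 2)) x
          - 2 * ω ^ 2 * x ^ 2 * (deriv^[2] (Wex1 ω hbar c)) x
          + 4 * ω ^ 4 * x ^ 2 = 0 := by
  set c : ℝ := 4*ω*hbar/3 with hc
  refine ⟨c, fun x => ?_⟩
  have hD : ∀ t : ℝ, (2*ω*t^2 + hbar) ≠ 0 := fun t => by positivity
  -- building block: derivative of the denominator base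
  have hden : ∀ t : ℝ, HasDerivAt (fun s : ℝ => 2*ω*s^2 + hbar) (2*ω*((2:ℕ)*t^1)) t :=
    fun t => ((hasDerivAt_pow 2 t).const_mul (2*ω)).add_const hbar
  -- W' = Pd1
  have l1 : ∀ t : ℝ, HasDerivAt (Wex1 ω hbar c) (Pd1 ω hbar t) t := by
    intro t
    have h := (((hasDerivAt_pow 2 t).const_mul (ω^2)).add
      (((((hasDerivAt_pow 2 t).const_mul (2*ω)).sub_const hbar).const_mul
          (8*hbar^2*ω)).div ((hden t).pow 2) (pow_ne_zero 2 (hD t)))).add_const c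
    refine HDshift h (by funext s; simp only [Wex1, Pi.add_apply, Pi.div_apply, Pi.pow_apply]) ?_
    simp only [Pd1, Pi.pow_apply]
    field_simp
    ring
  -- W'' = Pd2
  have l2 : ∀ t : ℝ, HasDerivAt (Pd1 ω hbar) (Pd2 ω hbar t) t := by
    intro t
    have hnum : HasDerivAt (fun s : ℝ =>
        98*ω^2*hbar^3*s - 52*ω^3*hbar^2*s^3 + 24*ω^4*hbar*s^5 + 16*ω^5*s^7)
        (98*ω^2*hbar^3*1 - 52*ω^3*hbar^2*((3:ℕ)*t^2) + 24*ω^4*hbar*((5:ℕ)*t^4)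
          + 16*ω^5*((7:ℕ)*t^6)) t := by
      exact (((hasDerivAt_id t).const_mul (98*ω^2*hbar^3)).sub
        ((hasDerivAt_pow 3 t).const_mul (52*ω^3*hbar^2))).add
        ((hasDerivAt_pow 5 t).const_mul (24*ω^4*hbar)) |>.add
        ((hasDerivAt_pow 7 t).const_mul (16*ω^5))
    have h := hnum.div ((hden t).pow 3) (pow_ne_zero 3 (hD t))
    refine HDshift h (by funext s; simp only [Pd1, Pi.div_apply, Pi.pow_apply]) ?_
    simp only [Pd2, Pi.pow_apply]
    field_simp
    ring
  -- W''' = Pd3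
  have l3 : ∀ t : ℝ, HasDerivAt (Pd2 ω hbar) (Pd3 ω hbar t) t := by
    intro t
    have hnum : HasDerivAt (fun s : ℝ =>
        98*ω^2*hbar^4 - 1136*ω^3*hbar^3*s^2 + 432*ω^4*hbar^2*s^4 + 64*ω^5*hbar*s^6
          + 32*ω^6*s^8)
        (0 - 1136*ω^3*hbar^3*((2:ℕ)*t^1) + 432*ω^4*hbar^2*((4:ℕ)*t^3)
          + 64*ω^5*hbar*((6:ℕ)*t^5) + 32*ω^6*((8:ℕ)*t^7)) t := by
      exact (((hasDerivAt_const t (98*ω^2*hbar^4)).sub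
        ((hasDerivAt_pow 2 t).const_mul (1136*ω^3*hbar^3))).add
        ((hasDerivAt_pow 4 t).const_mul (432*ω^4*hbar^2))).add
        ((hasDerivAt_pow 6 t).const_mul (64*ω^5*hbar)) |>.add
        ((hasDerivAt_pow 8 t).const_mul (32*ω^6))
    have h := hnum.div ((hden t).pow 4) (pow_ne_zero 4 (hD t))
    refine HDshift h (by funext s; simp only [Pd2, Pi.div_apply, Pi.pow_apply]) ?_
    simp only [Pd3, Pi.pow_apply]
    field_simp
    ring
  -- W'''' = Pd4
  have l4 : ∀ t : ℝ, HasDerivAt (Pd3 ω hbar) (Pd4 ω hbar t) t := by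
    intro t
    have hnum : HasDerivAt (fun s : ℝ =>
        -(3840*ω^3*hbar^4*s) + 15360*ω^4*hbar^3*s^3 - 3072*ω^5*hbar^2*s^5)
        (-(3840*ω^3*hbar^4*1) + 15360*ω^4*hbar^3*((3:ℕ)*t^2)
          - 3072*ω^5*hbar^2*((5:ℕ)*t^4)) t := by
      exact ((((hasDerivAt_id t).const_mul (3840*ω^3*hbar^4)).neg).add
        ((hasDerivAt_pow 3 t).const_mul (15360*ω^4*hbar^3))).sub
        ((hasDerivAt_pow 5 t).const_mul (3072*ω^5*hbar^2))
    have h := hnum.div ((hden t).pow 5) (pow_ne_zero 5 (hD t))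
    refine HDshift h (by funext s; simp only [Pd3, Pi.div_apply, Pi.pow_apply]) ?_
    simp only [Pd4, Pi.pow_apply]
    field_simp
    ring
  -- identify the iterated derivatives
  have d1 : deriv (Wex1 ω hbar c) = Pd1 ω hbar := funext fun t => (l1 t).deriv
  have d2 : deriv (Pd1 ω hbar) = Pd2 ω hbar := funext fun t => (l2 t).deriv
  have d3 : deriv (Pd2 ω hbar) = Pd3 ω hbar := funext fun t => (l3 t).deriv
  have d4 : deriv (Pd3 ω hbar) = Pd4 ω hbar := funext fun t => (l4 t).deriv
  have e4 : deriv^[4] (Wex1 ω hbar c) = Pd4 ω hbar := by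
    have h4 : deriv^[4] (Wex1 ω hbar c)
        = deriv (deriv (deriv (deriv (Wex1 ω hbar c)))) := rfl
    rw [h4, d1, d2, d3, d4]
  have e2 : deriv^[2] (Wex1 ω hbar c) = Pd2 ω hbar := by
    have h2 : deriv^[2] (Wex1 ω hbar c) = deriv (deriv (Wex1 ω hbar c)) := rfl
    rw [h2, d1, d2]
  -- derivative of t * W t
  have exW : deriv (fun t => t * Wex1 ω hbar c t) x
      = 1 * Wex1 ω hbar c x + x * Pd1 ω hbar x := by
    have h : HasDerivAt (fun t : ℝ => t * Wex1 ω hbar c t)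
        (1 * Wex1 ω hbar c x + x * Pd1 ω hbar x) x :=
      HDshift ((hasDerivAt_id x).mul (l1 x)) (by funext s; rfl) rfl
    exact h.deriv
  -- second derivative of W^2
  have hsq1 : ∀ t : ℝ, HasDerivAt (fun s => (Wex1 ω hbar c s) ^ 2)
      (2 * (Wex1 ω hbar c t * Pd1 ω hbar t)) t := by
    intro t
    refine HDshift ((l1 t).mul (l1 t)) (by funext s; simp only [Pi.mul_apply]; ring) (by ring)
  have dsq1 : deriv (fun s => (Wex1 ω hbar c s) ^ 2)
      = fun t => 2 * (Wex1 ω hbar c t * Pd1 ω hbar t) :=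
    funext fun t => (hsq1 t).deriv
  have hsq2 : HasDerivAt (fun t => 2 * (Wex1 ω hbar c t * Pd1 ω hbar t))
      (2 * (Pd1 ω hbar x * Pd1 ω hbar x + Wex1 ω hbar c x * Pd2 ω hbar x)) x :=
    ((l1 x).mul (l2 x)).const_mul 2
  have esq : deriv^[2] (fun t => (Wex1 ω hbar c t) ^ 2) x
      = 2 * (Pd1 ω hbar x * Pd1 ω hbar x + Wex1 ω hbar c x * Pd2 ω hbar x) := by
    have h2 : deriv^[2] (fun t => (Wex1 ω hbar c t) ^ 2)
        = deriv (deriv (fun t => (Wex1 ω hbar c t) ^ 2)) := rfl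
    rw [h2, dsq1]
    exact hsq2.deriv
  rw [e4, e2, exW, esq]
  simp only [Wex1, Pd1, Pd2, Pd4, hc]
  field_simp
  ring
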